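/- Let R be a commutative ring, n ∈ ℕ, and x_1, …, x_n ∈ R. Then 1 − Σ_{k=1}^n x_k = ∏_{k=1}^n (1 − x_k) − Σ_{1 ≤ k < ℓ ≤ n} x_k · x_ℓ · ∏_{ℓ' = ℓ+1}^n (1 − x_{ℓ'}). -/

import Mathlib

lemma stmt_17_aux (R : Type) [CommRing R] (n : ℕ) (x : Fin n → R) (s : Finset (Fin n)) :
    ∏ k ∈ s, (1 - x k) =
      1 - ∑ k ∈ s, x k * ∏ m ∈ s.filter (fun m => k < m), (1 - x m) := by
  induction s using Finset.induction_on_min with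
  | empty => simp
  | insert a s ha ih =>
    have hna : a ∉ s := fun h => lt_irrefl a (ha a h)
    have h1 : (insert a s).filter (fun m => a < m) = s := by
      ext m
      simp only [Finset.mem_filter, Finset.mem_insert]
      constructor
      · rintro ⟨h | h, hlt⟩
        · exact absurd hlt (by simp [h])
        · exact h
      · intro hm; exact ⟨Or.inr hm, ha m hm⟩
    have h2 : ∀ k ∈ s, (insert a s).filter (fun m => k < m) = s.filter (fun m => k < m) := by
      intro k hk
      ext m
      simp only [Finset.mem_filter, Finset.mem_insert]
      constructor
      · rintro ⟨h | h, hlt⟩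
        · exact absurd hlt (by simp [h, (ha k hk).asymm])
        · exact ⟨h, hlt⟩
      · rintro ⟨h, hlt⟩; exact ⟨Or.inr h, hlt⟩
    rw [Finset.prod_insert hna, Finset.sum_insert hna, h1,
      Finset.sum_congr rfl (fun k hk => by rw [h2 k hk]), ih]
    ring

/-- The pigeon-axiom rewriting identity:
`1 − Σ_k x_k = ∏_k (1 − x_k) − Σ_{k<ℓ} x_k·x_ℓ·∏_{ℓ'>ℓ} (1 − x_{ℓ'})`. -/
theorem stmt_17 (R : Type) [CommRing R] (n : ℕ) (x : Fin n → R) :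
    1 - ∑ k : Fin n, x k =
      (∏ k : Fin n, (1 - x k)) -
        ∑ p ∈ Finset.univ.filter (fun p : Fin n × Fin n => p.1 < p.2),
          x p.1 * x p.2 * ∏ m ∈ Finset.univ.filter (fun m : Fin n => p.2 < m), (1 - x m) := by
  have haux := stmt_17_aux R n x Finset.univ
  have hsub : ∀ k : Fin n,
      Finset.univ.filter (fun m => k < m) =
        (Finset.univ.filter (fun m => k < m) : Finset (Fin n)) := fun _ => rfl
  -- rewrite inner products of haux once more
  have hstep : ∀ k : Fin n,
      ∏ m ∈ Finset.univ.filter (fun m => k < m), (1 - x m) =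
        1 - ∑ l ∈ Finset.univ.filter (fun m => k < m),
          x l * ∏ m ∈ Finset.univ.filter (fun m : Fin n => l < m), (1 - x m) := by
    intro k
    rw [stmt_17_aux R n x]
    congr 1
    refine Finset.sum_congr rfl fun l hl => ?_
    simp only [Finset.mem_filter, Finset.mem_univ, true_and] at hl
    have hset : (Finset.univ.filter (fun m => k < m)).filter (fun m => l < m) =
        Finset.univ.filter (fun m : Fin n => l < m) := by
      ext m
      simp only [Finset.mem_filter, Finset.mem_univ, true_and]
      exact ⟨fun h => h.2, fun h => ⟨hl.trans h, h⟩⟩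
    rw [hset]
  rw [Finset.sum_congr rfl (fun k _ => by rw [hstep k])] at haux
  -- expand the pair sum into a double sum
  have hpair :
      ∑ p ∈ Finset.univ.filter (fun p : Fin n × Fin n => p.1 < p.2),
          x p.1 * x p.2 * ∏ m ∈ Finset.univ.filter (fun m : Fin n => p.2 < m), (1 - x m) =
        ∑ k : Fin n, ∑ l ∈ Finset.univ.filter (fun m => k < m),
          x k * x l * ∏ m ∈ Finset.univ.filter (fun m : Fin n => l < m), (1 - x m) := by
    rw [Finset.sum_filter]
    rw [Fintype.sum_prod_type]
    refine Finset.sum_congr rfl fun k _ => ?_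
    rw [Finset.sum_filter]
  rw [hpair]
  rw [haux]
  rw [Finset.sum_congr rfl (fun k (_ : k ∈ Finset.univ) => (mul_sub (x k) _ _ : x k * _ = _))]
  rw [Finset.sum_sub_distrib]
  simp only [mul_one]
  simp only [Finset.mul_sum, mul_assoc]
  ring
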